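/- arXiv:2509.04540 — 5 statements merged into one kernel-verified Lean document; each statement's English description precedes it below -/
import Mathlib

section
/- If S is a symplectic transformation of a finite-dimensional symplectic vector space and −1 is a root of the characteristic polynomial of S, then it occurs with even multiplicity; likewise the root 1, if present, occurs with even multiplicity. -/
open Polynomial Module Matrix

section Aux

variable {F : Type*} [Field F]

/-- Characteristic polynomial of `M - t • 1` is `charpoly M` composed with `X + C t`. -/
lemma matrix_charpoly_sub_smul_one {n : Type*} [DecidableEq n] [Fintype n]
    (M : Matrix n n F) (t : F) :
    (M - t • 1).charpoly = M.charpoly.comp (X + C t) := by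
  have hmap : (M - t • 1).charmatrix =
      (M.charmatrix).map (aeval (X + C t) : F[X] →ₐ[F] F[X]) := by
    ext i j : 2
    by_cases h : i = j
    · subst h
      simp only [Matrix.charmatrix_apply_eq, Matrix.sub_apply, Matrix.smul_apply,
        Matrix.one_apply_eq, Matrix.map_apply, map_sub, map_add, aeval_X, aeval_C, smul_eq_mul,
        mul_one, algebraMap_eq]
      ring
    · simp [Matrix.charmatrix_apply_ne _ _ _ h, Matrix.sub_apply, Matrix.smul_apply,
        Matrix.one_apply_ne h]
  rw [Matrix.charpoly, Matrix.charpoly, hmap, comp_eq_aeval]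
  rw [show M.charmatrix.map (aeval (X + C t) : F[X] →ₐ[F] F[X]) =
      (RingHom.mapMatrix ((aeval (X + C t) : F[X] →ₐ[F] F[X]) : F[X] →+* F[X])) M.charmatrix
    from rfl, ← RingHom.map_det]
  rfl

variable {V : Type*} [AddCommGroup V] [Module F V] [FiniteDimensional F V]

/-- Root multiplicity of `t` in the characteristic polynomial equals the dimension of the
generalized eigenspace `ker (φ - t)^(dim V)`. -/
lemma rootMultiplicity_charpoly_eq_finrank (φ : Module.End F V) (t : F) :
    (LinearMap.charpoly φ).rootMultiplicity t =
      finrank F (LinearMap.ker ((φ - t • 1) ^ finrank F V)) := by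
  classical
  have hcp : LinearMap.charpoly (φ - t • 1) = (LinearMap.charpoly φ).comp (X + C t) := by
    let b := finBasis F V
    rw [← LinearMap.charpoly_toMatrix (φ - t • 1) b, ← LinearMap.charpoly_toMatrix φ b]
    have : LinearMap.toMatrix b b (φ - t • 1) = LinearMap.toMatrix b b φ - t • 1 := by
      simp [map_sub, _root_.map_smul, LinearMap.toMatrix_one]
    rw [this, matrix_charpoly_sub_smul_one]
  have h1 : (φ - t • 1).maxGenEigenspace 0 =
      LinearMap.ker ((φ - t • 1) ^ finrank F V) := by
    rw [Module.End.maxGenEigenspace_eq_genEigenspace_finrank, Module.End.genEigenspace_nat]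
    simp
  rw [Polynomial.rootMultiplicity_eq_natTrailingDegree, ← hcp,
    ← LinearMap.finrank_maxGenEigenspace_zero_eq (φ - t • 1), h1]

/-- A finite-dimensional space with a nondegenerate alternating form (char ≠ 2) has even
dimension. -/
lemma even_finrank_of_isAlt_nondegenerate {W : Type*} [AddCommGroup W] [Module F W]
    [FiniteDimensional F W] (h2 : (2 : F) ≠ 0) (B : LinearMap.BilinForm F W)
    (halt : B.IsAlt) (hnd : B.Nondegenerate) : Even (finrank F W) := by
  classical
  by_contra hodd
  rw [Nat.not_even_iff_odd] at hodd
  let b := finBasis F W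
  have hdet := (LinearMap.BilinForm.nondegenerate_iff_det_ne_zero b).mp hnd
  set A := LinearMap.BilinForm.toMatrix b B with hA
  have hskew : Aᵀ = -A := by
    ext i j
    simp only [Matrix.transpose_apply, Matrix.neg_apply, hA, LinearMap.BilinForm.toMatrix_apply]
    rw [← halt.neg_eq]
  have hd : A.det = -A.det := by
    conv_lhs => rw [← Matrix.det_transpose, hskew, Matrix.det_neg]
    simp [Fintype.card_fin, hodd.neg_one_pow]
  apply hdet
  have : (2 : F) * A.det = 0 := by linear_combination hd
  exact (mul_eq_zero.mp this).resolve_left h2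

lemma even_rootMultiplicity_of_symplectic
    (h2 : (2 : F) ≠ 0) (ω : LinearMap.BilinForm F V) (halt : ω.IsAlt)
    (hnd : ω.Nondegenerate) (S : V →ₗ[F] V) (hS : ∀ v w : V, ω (S v) (S w) = ω v w)
    (t : F) (ht : t * t = 1) :
    Even ((LinearMap.charpoly S).rootMultiplicity t) := by
  classical
  -- S is bijective
  have hinj : Function.Injective S := by
    intro x y hxy
    have h0 : S (x - y) = 0 := by rw [map_sub, hxy, sub_self]
    have hall : ∀ w, ω (x - y) w = 0 := by
      intro w
      have := hS (x - y) w
      rw [h0] at this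
      simpa using this.symm
    exact sub_eq_zero.mp (hnd.1 _ hall)
  let e : V ≃ₗ[F] V :=
    LinearEquiv.ofBijective S ⟨hinj, (LinearMap.injective_iff_surjective).mp hinj⟩
  set T : V →ₗ[F] V := (e.symm : V →ₗ[F] V) with hT
  have hST : ∀ x, S (T x) = x := fun x => e.apply_symm_apply x
  have hTS : ∀ x, T (S x) = x := fun x => e.symm_apply_apply x
  have hSω : ∀ x y, ω (S x) y = ω x (T y) := by
    intro x y
    conv_lhs => rw [← hST y]
    rw [hS]
  set N : V →ₗ[F] V := S - t • 1 with hNdef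
  -- the ω-adjoint of N is -t • (T * N)
  have hadj : ∀ x y, ω (N x) y = (-t) * ω x ((T * N) y) := by
    intro x y
    have h1 : (T * N) y = y - t • T y := by
      show T (N y) = _
      have : N y = S y - t • y := by simp [hNdef]
      rw [this, map_sub, _root_.map_smul, hTS]
    have h2 : N x = S x - t • x := by simp [hNdef]
    rw [h1, h2, map_sub ω, LinearMap.sub_apply, _root_.map_smul ω, LinearMap.smul_apply, smul_eq_mul,
      hSω x y, map_sub (ω x), _root_.map_smul (ω x), smul_eq_mul]
    linear_combination (-((ω x) (T y))) * ht
  have hpow : ∀ (k : ℕ) (x y : V), ω ((N ^ k) x) y = (-t) ^ k * ω x (((T * N) ^ k) y) := by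
    intro k
    induction k with
    | zero => intro x y; simp
    | succ k ih =>
      intro x y
      rw [pow_succ N, Module.End.mul_apply, ih, hadj, pow_succ' (T * N), pow_succ (-t)]
      simp only [Module.End.mul_apply]
      ring
  have hcomm : T * N = N * T := by
    have hTS1 : T * S = 1 := LinearMap.ext hTS
    have hST1 : S * T = 1 := LinearMap.ext hST
    simp only [hNdef, mul_sub, sub_mul, hTS1, hST1, mul_smul_comm, smul_mul_assoc, mul_one,
      one_mul]
  have hTNpow : ∀ k : ℕ, (T * N) ^ k = T ^ k * N ^ k := fun k =>
    (Commute.mul_pow hcomm k)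
  set d := finrank F V with hd
  set U := LinearMap.ker (N ^ d) with hU
  obtain ⟨n, hdn, hcompl⟩ :
      ∃ n, d ≤ n ∧ IsCompl (LinearMap.ker (N ^ n)) (LinearMap.range (N ^ n)) := by
    obtain ⟨n, hn⟩ := Filter.eventually_atTop.mp
      ((Filter.eventually_ge_atTop d).and N.eventually_isCompl_ker_pow_range_pow)
    exact ⟨n, (hn n le_rfl).1, (hn n le_rfl).2⟩
  have hker : LinearMap.ker (N ^ n) = U := by
    rw [hU, hd]
    exact Module.End.ker_pow_eq_ker_pow_finrank_of_le hdn
  -- range (N^n) is ω-orthogonal to U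
  have horth : ∀ u ∈ U, ∀ v : V, ω ((N ^ n) v) u = 0 := by
    intro u hu v
    rw [hpow, hTNpow, Module.End.mul_apply]
    have hu' : (N ^ n) u = 0 := by
      rw [← LinearMap.mem_ker, hker]; exact hu
    rw [hu', map_zero, map_zero, mul_zero]
  -- the restriction of ω to U is nondegenerate
  have hrestnd : (ω.restrict U).Nondegenerate := by
    refine (LinearMap.BilinForm.IsAlt.isRefl (B₁ := ω.restrict U) (fun x => halt x)).nondegenerate_iff_separatingLeft.mpr ?_
    rintro ⟨u, hu⟩ H
    have hall : ∀ v : V, ω u v = 0 := by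
      intro v
      have hv : v ∈ U ⊔ LinearMap.range (N ^ n) := by
        rw [← hker, hcompl.sup_eq_top]; trivial
      obtain ⟨a, ha, b, hb, rfl⟩ := Submodule.mem_sup.mp hv
      have h1 : ω u a = 0 := H ⟨a, ha⟩
      have h2 : ω u b = 0 := by
        obtain ⟨v', rfl⟩ := hb
        have := horth u hu v'
        rw [← halt.neg_eq, this, neg_zero]
      rw [map_add, h1, h2, add_zero]
    have : u = 0 := hnd.1 u hall
    exact Subtype.ext this
  have hresalt : (ω.restrict U).IsAlt := fun x => halt x
  have heven : Even (finrank F U) :=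
    even_finrank_of_isAlt_nondegenerate h2 (ω.restrict U) hresalt hrestnd
  rwa [rootMultiplicity_charpoly_eq_finrank S t]

end Aux

/-- The roots `1` and `-1` of the characteristic polynomial of a symplectic transformation
occur with even multiplicity. -/
theorem stmt2 {F V : Type*} [Field F] [AddCommGroup V] [Module F V]
    [FiniteDimensional F V] (g : ℕ) (hdim : Module.finrank F V = 2 * g)
    (hchar : (2 : F) ≠ 0)
    (ω : LinearMap.BilinForm F V) (halt : ω.IsAlt) (hnd : ω.Nondegenerate)
    (S : V →ₗ[F] V) (hS : ∀ v w : V, ω (S v) (S w) = ω v w) :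
    Even ((LinearMap.charpoly S).rootMultiplicity (-1)) ∧
    Even ((LinearMap.charpoly S).rootMultiplicity 1) := by
  exact ⟨even_rootMultiplicity_of_symplectic hchar ω halt hnd S hS (-1) (by ring),
    even_rootMultiplicity_of_symplectic hchar ω halt hnd S hS 1 (by ring)⟩
end

section
/- For a symplectic transformation S of (V, ω) with characteristic polynomial splitting over F, the generalised eigenspace for eigenvalue λ = 1 (respectively λ = −1) is a symplectic subspace of V: the restriction of ω to it is non-degenerate. -/
open Polynomial

private lemma key_orth {F V : Type*} [Field F] [AddCommGroup V] [Module F V]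
    (ω : LinearMap.BilinForm F V)
    (S : Module.End F V) (hS : ∀ v w : V, ω (S v) (S w) = ω v w) (lam : F) :
    ∀ (d k : ℕ) (q : F[X]), q.Monic → q.Splits →
    (∀ μ : F, q.IsRoot μ → lam * μ ≠ 1) → k + q.natDegree ≤ d →
    ∀ v w : V, ((S - lam • 1) ^ k) v = 0 → (Polynomial.aeval S q) w = 0 → ω v w = 0 := by
  intro d
  induction d with
  | zero =>
    intro k q hq hsp hroots hle v w hv hw
    have hk : k = 0 := by omega
    subst hk
    simp only [pow_zero, Module.End.one_apply] at hv
    simp [hv]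
  | succ d IH =>
    intro k q hq hsp hroots hle v w hv hw
    rcases k with _ | k
    · simp only [pow_zero, Module.End.one_apply] at hv
      simp [hv]
    by_cases hdeg : q.natDegree = 0
    · have hq1 : q = 1 := hq.natDegree_eq_zero.mp hdeg
      subst hq1
      simp only [map_one, Module.End.one_apply] at hw
      simp [hw]
    · have hdeg' : q.degree ≠ 0 := fun h =>
        hdeg (Polynomial.natDegree_eq_zero_iff_degree_le_zero.mpr (le_of_eq h))
      obtain ⟨μ, hμ⟩ := hsp.exists_eval_eq_zero hdeg'
      have hroot : q.IsRoot μ := by simpa using hμ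
      set q' : F[X] := q /ₘ (X - C μ) with hq'def
      have hfac : (X - C μ) * q' = q := (mul_divByMonic_eq_iff_isRoot).mpr hroot
      have hq'monic : q'.Monic :=
        (monic_X_sub_C μ).of_mul_monic_left (hfac ▸ hq)
      have hq'ne : q' ≠ 0 := hq'monic.ne_zero
      have hsp' : q'.Splits :=
        hsp.of_dvd hq.ne_zero (Dvd.intro_left _ hfac)
      have hdegq : q.natDegree = q'.natDegree + 1 := by
        rw [← hfac, Polynomial.natDegree_mul (X_sub_C_ne_zero μ) hq'ne,
          natDegree_X_sub_C]
        omega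
      have hroots' : ∀ ν : F, q'.IsRoot ν → lam * ν ≠ 1 := fun ν hν =>
        hroots ν (hν.dvd (Dvd.intro_left _ hfac))
      have he : (S - μ • 1) = Polynomial.aeval S (X - C μ) := by
        simp [Module.algebraMap_end_eq_smul_id]
        rfl
      have hw' : (Polynomial.aeval S q') ((S - μ • 1) w) = 0 := by
        rw [he, ← Module.End.mul_apply, ← map_mul, mul_comm q' (X - C μ), hfac, hw]
      have hv' : ((S - lam • 1) ^ k) ((S - lam • 1) v) = 0 := by
        rw [← Module.End.mul_apply, ← pow_succ, hv]
      have h1 : ω v ((S - μ • 1) w) = 0 :=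
        IH (k+1) q' hq'monic hsp' hroots' (by omega) v _ hv hw'
      have h2 : ω ((S - lam • 1) v) w = 0 :=
        IH k q hq hsp hroots (by omega) _ w hv' hw
      have h3 : ω ((S - lam • 1) v) ((S - μ • 1) w) = 0 :=
        IH k q' hq'monic hsp' hroots' (by omega) _ _ hv' hw'
      have hsv : S v = (S - lam • 1) v + lam • v := by
        simp [LinearMap.sub_apply, LinearMap.smul_apply]
      have hsw : S w = (S - μ • 1) w + μ • w := by
        simp [LinearMap.sub_apply, LinearMap.smul_apply]
      have hiden : ω v w = (lam * μ) * ω v w := by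
        conv_lhs => rw [← hS v w, hsv, hsw]
        simp only [map_add, LinearMap.add_apply, map_smul, LinearMap.smul_apply,
          smul_eq_mul, h1, h2, h3, mul_zero, zero_add, add_zero]
        ring
      have : (1 - lam * μ) * ω v w = 0 := by linear_combination hiden
      rcases mul_eq_zero.mp this with h | h
      · exact absurd (sub_eq_zero.mp h).symm (hroots μ hroot)
      · exact h

/-- For a symplectic transformation with split characteristic polynomial, the generalised
eigenspace for eigenvalue `λ = ±1` is a symplectic subspace: `ω` restricts non-degenerately. -/
theorem stmt5 {F V : Type*} [Field F] [AddCommGroup V] [Module F V]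
    [FiniteDimensional F V] (hchar : (2 : F) ≠ 0)
    (ω : LinearMap.BilinForm F V) (halt : ω.IsAlt) (hnd : ω.Nondegenerate)
    (S : Module.End F V) (hS : ∀ v w : V, ω (S v) (S w) = ω v w)
    (hsplit : Polynomial.Splits ((LinearMap.charpoly S).map (RingHom.id F)))
    (lam : F) (hlam : lam = 1 ∨ lam = -1) :
    ∀ v ∈ LinearMap.ker ((lam • (1 : Module.End F V) - S) ^ Module.finrank F V),
      (∀ w ∈ LinearMap.ker ((lam • (1 : Module.End F V) - S) ^ Module.finrank F V),
        ω v w = 0) → v = 0 := by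
  intro v hv hvw
  set n := Module.finrank F V with hn
  set p := LinearMap.charpoly S with hp
  have hpmonic : p.Monic := LinearMap.charpoly_monic S
  have hpne : p ≠ 0 := hpmonic.ne_zero
  set m := Polynomial.rootMultiplicity lam p with hm
  set q := p /ₘ (X - C lam) ^ m with hqdef
  have hfac : (X - C lam) ^ m * q = p :=
    Polynomial.pow_mul_divByMonic_rootMultiplicity_eq p lam
  have hqlam : q.eval lam ≠ 0 :=
    Polynomial.eval_divByMonic_pow_rootMultiplicity_ne_zero lam hpne
  have hqmonic : q.Monic :=
    ((monic_X_sub_C lam).pow m).of_mul_monic_left (hfac ▸ hpmonic)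
  have hqsplits : q.Splits :=
    (by simpa using hsplit : p.Splits).of_dvd hpne (Dvd.intro_left _ hfac)
  have hqroots : ∀ μ : F, q.IsRoot μ → lam * μ ≠ 1 := by
    intro μ hμ h1
    have hne : μ ≠ lam := fun e => hqlam (by rw [← e]; exact hμ)
    rcases hlam with rfl | rfl
    · exact hne (by linear_combination h1)
    · exact hne (by linear_combination -h1)
  have hco : IsCoprime ((X - C lam) ^ m) q :=
    ((Polynomial.irreducible_X_sub_C lam).coprime_iff_not_dvd.mpr
      (fun hd => hqlam (dvd_iff_isRoot.mp hd))).pow_left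
  obtain ⟨a, b, hab⟩ := hco
  have hCH : Polynomial.aeval S p = 0 := LinearMap.aeval_self_charpoly S
  have hmn : m ≤ n := by
    have h1 : ((X - C lam) ^ m).natDegree ≤ p.natDegree :=
      Polynomial.natDegree_le_of_dvd ⟨q, hfac.symm⟩ hpne
    rw [Polynomial.natDegree_pow, natDegree_X_sub_C, mul_one, hp,
      LinearMap.charpoly_natDegree] at h1
    exact h1
  have hv0 : ((lam • (1 : Module.End F V) - S) ^ n) v = 0 := LinearMap.mem_ker.mp hv
  have hneg : (S - lam • (1 : Module.End F V)) = -(lam • 1 - S) := (neg_sub _ _).symm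
  have hvker : ((S - lam • (1 : Module.End F V)) ^ n) v = 0 := by
    rw [hneg, neg_pow, Module.End.mul_apply, hv0, map_zero]
  have he : (S - lam • (1 : Module.End F V)) ^ m = Polynomial.aeval S ((X - C lam) ^ m) := by
    simp [Module.algebraMap_end_eq_smul_id]
    rfl
  apply hnd.1 v
  intro u
  have hu : u = (Polynomial.aeval S (a * (X - C lam) ^ m)) u
      + (Polynomial.aeval S (b * q)) u := by
    have h := congrArg (fun r : Polynomial F => (Polynomial.aeval S r) u) hab
    simpa [map_add, LinearMap.add_apply] using h.symm
  set u1 := (Polynomial.aeval S (a * (X - C lam) ^ m)) u with hu1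
  set u2 := (Polynomial.aeval S (b * q)) u with hu2
  have h1 : (Polynomial.aeval S q) u1 = 0 := by
    rw [hu1, ← Module.End.mul_apply, ← map_mul]
    have : q * (a * (X - C lam) ^ m) = a * p := by rw [← hfac]; ring
    rw [this, map_mul, Module.End.mul_apply, hCH]
    simp
  have h2 : ((S - lam • (1 : Module.End F V)) ^ m) u2 = 0 := by
    rw [he, hu2, ← Module.End.mul_apply, ← map_mul]
    have : (X - C lam) ^ m * (b * q) = b * p := by rw [← hfac]; ring
    rw [this, map_mul, Module.End.mul_apply, hCH]
    simp
  have hωu1 : ω v u1 = 0 :=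
    key_orth ω S hS lam (n + q.natDegree) n q hqmonic hqsplits hqroots le_rfl v u1 hvker h1
  have hωu2 : ω v u2 = 0 := by
    apply hvw u2
    rw [LinearMap.mem_ker]
    have h3 : ((S - lam • (1 : Module.End F V)) ^ n) u2 = 0 := by
      rw [show n = (n - m) + m by omega, pow_add, Module.End.mul_apply, h2, map_zero]
    rw [show (lam • (1 : Module.End F V) - S) = -(S - lam • 1) by rw [neg_sub],
      neg_pow, Module.End.mul_apply, h3, map_zero]
  calc ω v u = ω v (u1 + u2) := by rw [← hu]
  _ = 0 := by rw [map_add, hωu1, hωu2, add_zero]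
end

section
/- For a symplectic transformation S of (V, ω) whose characteristic polynomial splits completely, each generalised eigenspace S_λ with λ ≠ ±1 is an isotropic subspace of V. -/
private theorem aux6 {F V : Type*} [Field F] [AddCommGroup V] [Module F V]
    (ω : LinearMap.BilinForm F V)
    (S : Module.End F V) (hS : ∀ v w : V, ω (S v) (S w) = ω v w)
    (lam : F) (hl : lam * lam ≠ 1) :
    ∀ k m n : ℕ, m + n ≤ k →
      ∀ v ∈ LinearMap.ker ((lam • (1 : Module.End F V) - S) ^ m),
      ∀ w ∈ LinearMap.ker ((lam • (1 : Module.End F V) - S) ^ n),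
      ω v w = 0 := by
  intro k
  induction k with
  | zero =>
    intro m n hmn v hv w hw
    obtain rfl : m = 0 := by omega
    simp only [pow_zero, Module.End.one_eq_id, LinearMap.ker_id, Submodule.mem_bot] at hv
    simp [hv]
  | succ k ih =>
    intro m n hmn v hv w hw
    set T : Module.End F V := lam • (1 : Module.End F V) - S with hT
    match m, n with
    | 0, n =>
      simp only [pow_zero, Module.End.one_eq_id, LinearMap.ker_id, Submodule.mem_bot] at hv
      simp [hv]
    | m + 1, 0 =>
      simp only [pow_zero, Module.End.one_eq_id, LinearMap.ker_id, Submodule.mem_bot] at hw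
      simp [hw]
    | m + 1, n + 1 =>
      have hv' : T v ∈ LinearMap.ker (T ^ m) := by
        rw [LinearMap.mem_ker]
        have : (T ^ (m + 1)) v = 0 := hv
        rw [pow_succ] at this
        simpa [Module.End.mul_apply] using this
      have hw' : T w ∈ LinearMap.ker (T ^ n) := by
        rw [LinearMap.mem_ker]
        have : (T ^ (n + 1)) w = 0 := hw
        rw [pow_succ] at this
        simpa [Module.End.mul_apply] using this
      have e1 : ω v (T w) = 0 := by
        apply ih (m + 1) n (by omega) v hv (T w) hw'
      have e2 : ω (T v) w = 0 := by
        apply ih m (n + 1) (by omega) (T v) hv' w hw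
      have e3 : ω (T v) (T w) = 0 := by
        apply ih m n (by omega) (T v) hv' (T w) hw'
      have hSv : S v = lam • v - T v := by
        simp [hT, LinearMap.sub_apply]
      have hSw : S w = lam • w - T w := by
        simp [hT, LinearMap.sub_apply]
      have key : ω v w = lam * lam * ω v w := by
        conv_lhs => rw [← hS v w, hSv, hSw]
        simp only [map_sub, map_smul, LinearMap.sub_apply, LinearMap.smul_apply,
          smul_eq_mul, e1, e2, e3]
        ring
      have h4 : (1 - lam * lam) * ω v w = 0 := by linear_combination key
      rcases mul_eq_zero.mp h4 with h | h
      · exact absurd (by linear_combination -h) hl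
      · exact h

/-- For a symplectic transformation with split characteristic polynomial, each generalised
eigenspace `S_λ` with `λ ≠ ±1` is isotropic. -/
theorem stmt6 {F V : Type*} [Field F] [AddCommGroup V] [Module F V]
    [FiniteDimensional F V] (hchar : (2 : F) ≠ 0)
    (ω : LinearMap.BilinForm F V) (halt : ω.IsAlt) (hnd : ω.Nondegenerate)
    (S : Module.End F V) (hS : ∀ v w : V, ω (S v) (S w) = ω v w)
    (hsplit : Polynomial.Splits (LinearMap.charpoly S))
    (lam : F) (h1 : lam ≠ 1) (hm1 : lam ≠ -1) :
    ∀ v ∈ LinearMap.ker ((lam • (1 : Module.End F V) - S) ^ Module.finrank F V),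
      ∀ w ∈ LinearMap.ker ((lam • (1 : Module.End F V) - S) ^ Module.finrank F V),
        ω v w = 0 := by
  have hl : lam * lam ≠ 1 := by
    intro h
    rcases mul_self_eq_one_iff.mp h with h | h
    · exact h1 h
    · exact hm1 h
  intro v hv w hw
  exact aux6 ω S hS lam hl (Module.finrank F V + Module.finrank F V)
    (Module.finrank F V) (Module.finrank F V) le_rfl v hv w hw
end

section
/- Let f(t) = t^{2n} + a₁t^{2n−1} + ⋯ + a_n t^n + ⋯ + a₁ t + 1 be a self-reciprocal monic polynomial over a field F of characteristic ≠ 2. Then there exists a matrix S ∈ Sp_{2n}(F) (preserving the standard symplectic form) with characteristic polynomial f. -/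
open Polynomial Matrix Finset

namespace Stmt16Aux

variable {F : Type*} [Field F]

/-- The basis polynomials `X^(n-k) (X²+1)^k` are palindromic of size `2n`. -/
lemma reflect_basis (n k : ℕ) (hk : k ≤ n) :
    ((X : F[X]) ^ (n - k) * (X ^ 2 + 1) ^ k).reflect (2 * n)
      = X ^ (n - k) * (X ^ 2 + 1) ^ k := by
  have hXd : ((X : F[X]) ^ (n - k)).natDegree ≤ 2 * (n - k) := by
    simp [natDegree_X_pow]; omega
  have hq : ∀ j : ℕ, (((X : F[X]) ^ 2 + 1) ^ j).natDegree ≤ 2 * j := by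
    intro j
    calc (((X : F[X]) ^ 2 + 1) ^ j).natDegree ≤ j * ((X ^ 2 + 1 : F[X])).natDegree :=
          natDegree_pow_le
      _ ≤ 2 * j := by
          have : ((X ^ 2 + 1 : F[X])).natDegree ≤ 2 := by
            refine natDegree_add_le_of_degree_le ?_ ?_ <;> simp [natDegree_X_pow]
          nlinarith
  have hqrefl : ∀ j : ℕ, (((X : F[X]) ^ 2 + 1) ^ j).reflect (2 * j) = (X ^ 2 + 1) ^ j := by
    intro j
    induction j with
    | zero => simp [reflect_one]
    | succ j ih =>
        have : (2 : ℕ) * (j + 1) = 2 * j + 2 := by ring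
        rw [pow_succ, this, reflect_mul _ _ (hq j) (by
          refine natDegree_add_le_of_degree_le ?_ ?_ <;> simp [natDegree_X_pow]), ih]
        congr 1
        have : ((X : F[X]) ^ 2 + 1) = X ^ 2 + X ^ 0 := by simp
        rw [this, reflect_add, reflect_monomial, reflect_monomial]
        simp [revAt_le]
        ring
  have h2n : 2 * n = 2 * (n - k) + 2 * k := by omega
  rw [h2n, reflect_mul _ _ hXd (hq k), hqrefl, reflect_monomial, revAt_le (by omega)]
  congr 2
  omega

lemma natDegree_basis (n k : ℕ) (hk : k ≤ n) :
    ((X : F[X]) ^ (n - k) * (X ^ 2 + 1) ^ k).natDegree = n + k := by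
  have h1 : ((X : F[X]) ^ 2 + 1).natDegree = 2 := by
    simpa using natDegree_X_pow_add_C (n := 2) (r := (1 : F))
  have h2 : (((X : F[X]) ^ 2 + 1) ^ k).natDegree = 2 * k := by
    rw [natDegree_pow, h1]; ring
  have hne : ((X : F[X]) ^ 2 + 1) ≠ 0 := by
    intro hzero
    have := congrArg natDegree hzero
    simp [h1] at this
  rw [natDegree_mul (pow_ne_zero _ X_ne_zero) (pow_ne_zero _ hne), natDegree_X_pow, h2]
  omega

lemma monic_basis (n k : ℕ) :
    ((X : F[X]) ^ (n - k) * (X ^ 2 + 1) ^ k).Monic := by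
  have h1 : ((X : F[X]) ^ 2 + 1).Monic := by
    simpa using monic_X_pow_add_C (1 : F) (n := 2) two_ne_zero
  exact (monic_X_pow _).mul (h1.pow _)

lemma palin_step (n : ℕ) :
    ∀ m : ℕ, m ≤ n → ∀ g : F[X], g.natDegree ≤ n + m → g.reflect (2 * n) = g →
      ∃ h : F[X], h.natDegree ≤ m ∧ h.coeff m = g.coeff (n + m) ∧
        g = ∑ k ∈ range (n + 1), C (h.coeff k) * (X ^ (n - k) * (X ^ 2 + 1) ^ k) := by
  intro m
  induction m with
  | zero =>
    intro _ g hgd hrefl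
    have hg : g = C (g.coeff n) * X ^ n := by
      ext j
      rw [coeff_C_mul, coeff_X_pow]
      rcases lt_trichotomy j n with hj | hj | hj
      · have h1 : g.coeff j = g.coeff (2 * n - j) := by
          conv_lhs => rw [← hrefl]
          rw [coeff_reflect, revAt_le (by omega)]
        have h2 : g.coeff (2 * n - j) = 0 := coeff_eq_zero_of_natDegree_lt (by omega)
        rw [h1, h2, if_neg (by omega)]
        ring
      · subst hj; simp
      · have h2 : g.coeff j = 0 := coeff_eq_zero_of_natDegree_lt (by omega)
        rw [h2, if_neg (by omega)]
        ring
    refine ⟨C (g.coeff n), by simp, by simp, ?_⟩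
    rw [Finset.sum_eq_single 0 ?_ ?_]
    · simpa using hg
    · intro k hk hk0
      rw [coeff_C, if_neg hk0]
      simp
    · simp
  | succ m ih =>
    intro hm g hgd hrefl
    set b : F[X] := X ^ (n - (m + 1)) * (X ^ 2 + 1) ^ (m + 1) with hbdef
    set a := g.coeff (n + (m + 1)) with ha
    have hbm : b.Monic := monic_basis n (m + 1)
    have hbd : b.natDegree = n + (m + 1) := natDegree_basis n (m + 1) hm
    have hg'd : (g - C a * b).natDegree ≤ n + m := by
      refine natDegree_le_iff_coeff_eq_zero.mpr ?_
      intro N hN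
      rw [coeff_sub, coeff_C_mul]
      rcases eq_or_lt_of_le (Nat.succ_le_of_lt hN) with hN1 | hN1
      · have hNe : N = n + (m + 1) := by omega
        have hbc : b.coeff N = 1 := by rw [hNe, ← hbd]; exact hbm.coeff_natDegree
        rw [hbc, mul_one, hNe, ← ha, sub_self]
      · have h1 : g.coeff N = 0 := coeff_eq_zero_of_natDegree_lt (by omega)
        have h2 : b.coeff N = 0 := coeff_eq_zero_of_natDegree_lt (by omega)
        rw [h1, h2, mul_zero, sub_self]
    have hg'r : (g - C a * b).reflect (2 * n) = g - C a * b := by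
      have h1 : g - C a * b = g + C (-a) * b := by rw [map_neg]; ring
      rw [h1, reflect_add, reflect_C_mul, reflect_basis n (m + 1) hm, hrefl]
    obtain ⟨h', hd', hc', hrep'⟩ := ih (by omega) (g - C a * b) hg'd hg'r
    refine ⟨h' + C a * X ^ (m + 1), ?_, ?_, ?_⟩
    · exact natDegree_add_le_of_degree_le (hd'.trans (by omega))
        (natDegree_C_mul_X_pow_le a (m + 1))
    · have h0 : h'.coeff (m + 1) = 0 := coeff_eq_zero_of_natDegree_lt (by omega)
      rw [coeff_add, coeff_C_mul, coeff_X_pow, h0, if_pos rfl]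
      ring
    · have hsplit : ∀ k, C ((h' + C a * X ^ (m + 1)).coeff k)
          = C (h'.coeff k) + (if k = m + 1 then C a else 0) := by
        intro k
        rw [coeff_add, C_add, coeff_C_mul, coeff_X_pow]
        congr 1
        split_ifs with hkm
        · rw [mul_one]
        · rw [mul_zero, map_zero]
      have hsum2 : ∑ k ∈ range (n + 1), (if k = m + 1 then C a else 0)
          * (X ^ (n - k) * (X ^ 2 + 1) ^ k) = C a * b := by
        have hcong : ∀ k ∈ range (n + 1), (if k = m + 1 then C a else 0)
            * (X ^ (n - k) * (X ^ 2 + 1) ^ k)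
            = if k = m + 1 then C a * (X ^ (n - k) * (X ^ 2 + 1) ^ k) else 0 := by
          intro k _
          split_ifs <;> simp
        rw [Finset.sum_congr rfl hcong, Finset.sum_ite_eq' (range (n + 1)) (m + 1),
          if_pos (Finset.mem_range.mpr (by omega))]
      have expand : ∑ k ∈ range (n + 1), C ((h' + C a * X ^ (m + 1)).coeff k)
            * (X ^ (n - k) * (X ^ 2 + 1) ^ k)
          = (∑ k ∈ range (n + 1), C (h'.coeff k) * (X ^ (n - k) * (X ^ 2 + 1) ^ k))
            + ∑ k ∈ range (n + 1), (if k = m + 1 then C a else 0)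
              * (X ^ (n - k) * (X ^ 2 + 1) ^ k) := by
        rw [← Finset.sum_add_distrib]
        exact Finset.sum_congr rfl (fun k _ => by rw [hsplit k, add_mul])
      rw [expand, ← hrep', hsum2]
      ring

lemma exists_palin_rep (n : ℕ) (f : F[X]) (hm : f.Monic) (hdeg : f.natDegree = 2 * n)
    (hrefl : f.reflect (2 * n) = f) :
    ∃ h : F[X], h.Monic ∧ h.natDegree = n ∧
      f = ∑ k ∈ range (n + 1), C (h.coeff k) * (X ^ (n - k) * (X ^ 2 + 1) ^ k) := by
  obtain ⟨h, hd, hc, hrep⟩ := palin_step n n le_rfl f (by omega) hrefl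
  have hcn : h.coeff n = 1 := by
    rw [hc]
    have : n + n = f.natDegree := by omega
    rw [this]
    exact hm.coeff_natDegree
  have hdn : h.natDegree = n :=
    le_antisymm hd (le_natDegree_of_ne_zero (by rw [hcn]; exact one_ne_zero))
  exact ⟨h, by rw [Monic, Polynomial.leadingCoeff, hdn, hcn], hdn, hrep⟩

lemma symplectic_witness {n : ℕ} (B E G : Matrix (Fin n) (Fin n) F)
    (hE : Eᵀ = E) (hEG : E * G = 1) (hGE : G * E = 1) (hBE : Bᵀ * E = E * B) :
    fromBlocks Bᵀ (-E) G 0 ∈ Matrix.symplecticGroup (Fin n) F := by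
  have hGt : Gᵀ = G := by
    calc Gᵀ = Gᵀ * (E * G) := by rw [hEG, Matrix.mul_one]
      _ = (Gᵀ * Eᵀ) * G := by rw [hE, Matrix.mul_assoc]
      _ = (E * G)ᵀ * G := by rw [Matrix.transpose_mul]
      _ = G := by rw [hEG, Matrix.transpose_one, Matrix.one_mul]
  rw [SymplecticGroup.mem_iff, Matrix.J, Matrix.fromBlocks_transpose,
    Matrix.fromBlocks_multiply, Matrix.fromBlocks_multiply,
    Matrix.transpose_neg, hE, Matrix.transpose_transpose, hGt, Matrix.transpose_zero]
  simp only [Matrix.mul_zero, Matrix.zero_mul, Matrix.mul_one, Matrix.mul_neg,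
    Matrix.neg_mul, add_zero, zero_add, neg_neg, hEG, hGE, hBE]
  rw [neg_add_cancel]

lemma charmatrix_map_eval {K : Type*} [Field K] (ψ : F →+* K) (s : K) {m : ℕ}
    (M : Matrix (Fin m) (Fin m) F) :
    (charmatrix M).map (eval₂RingHom ψ s) = s • (1 : Matrix (Fin m) (Fin m) K) - M.map ψ := by
  ext i j
  by_cases hij : i = j
  · subst hij
    simp [charmatrix_apply_eq, Matrix.map_apply, Matrix.sub_apply, Matrix.smul_apply,
      Matrix.one_apply_eq]
  · simp [charmatrix_apply_ne _ _ _ hij, Matrix.map_apply, Matrix.sub_apply,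
      Matrix.smul_apply, Matrix.one_apply_ne hij]

lemma det_eval₂_charpoly {K : Type*} [Field K] (ψ : F →+* K) (s : K) {m : ℕ}
    (M : Matrix (Fin m) (Fin m) F) :
    (M.charpoly).eval₂ ψ s = ((s • (1 : Matrix (Fin m) (Fin m) K)) - M.map ψ).det := by
  rw [Matrix.charpoly, ← coe_eval₂RingHom, RingHom.map_det, RingHom.mapMatrix_apply,
    charmatrix_map_eval]

set_option synthInstance.maxHeartbeats 1000000 in
set_option maxHeartbeats 1000000 in
lemma charpoly_witness {n : ℕ} (B E G : Matrix (Fin n) (Fin n) F)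
    (hEG : E * G = 1) (h : F[X]) (hch : B.charpoly = h) (hdn : h.natDegree ≤ n) :
    (fromBlocks Bᵀ (-E) G 0).charpoly
      = ∑ k ∈ range (n + 1), C (h.coeff k) * (X ^ (n - k) * (X ^ 2 + 1) ^ k) := by
  classical
  set K := RatFunc F with hK
  set θ : F[X] →+* K := (algebraMap F[X] K : F[X] →+* K) with hθdef
  have hθinj : Function.Injective θ := IsFractionRing.injective F[X] K
  set ψ : F →+* K := θ.comp Polynomial.C with hψdef
  set t : K := θ X with htdef
  have hθeq : θ = eval₂RingHom ψ t := by
    apply Polynomial.ringHom_ext'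
    · ext a
      simp [hψdef]
    · simp [htdef]
  have ht : t ≠ 0 := by
    intro h0
    exact X_ne_zero (hθinj (by simpa using h0))
  apply hθinj
  -- left-hand side
  have hBψ : ((-(-E).map Polynomial.C) : Matrix (Fin n) (Fin n) F[X]).map θ = E.map ψ := by
    ext i j
    simp [Matrix.map_apply, hψdef]
  have hCψ : ((-(G.map Polynomial.C)) : Matrix (Fin n) (Fin n) F[X]).map θ
      = -(G.map ψ) := by
    ext i j
    simp [Matrix.map_apply, hψdef]
  have hDψ : (charmatrix (0 : Matrix (Fin n) (Fin n) F)).map θ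
      = t • (1 : Matrix (Fin n) (Fin n) K) := by
    rw [hθeq, charmatrix_map_eval]
    simp
  have hAψ : (charmatrix Bᵀ).map θ
      = t • (1 : Matrix (Fin n) (Fin n) K) - Bᵀ.map ψ := by
    rw [hθeq, charmatrix_map_eval]
  have hmulinv : (t • (1 : Matrix (Fin n) (Fin n) K)) * (t⁻¹ • 1) = 1 := by
    rw [Matrix.smul_mul, Matrix.mul_smul, smul_smul, mul_inv_cancel₀ ht, Matrix.mul_one,
      one_smul]
  have hmulinv' : (t⁻¹ • (1 : Matrix (Fin n) (Fin n) K)) * (t • 1) = 1 := by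
    rw [Matrix.smul_mul, Matrix.mul_smul, smul_smul, inv_mul_cancel₀ ht, Matrix.mul_one,
      one_smul]
  haveI hinv : Invertible (t • (1 : Matrix (Fin n) (Fin n) K)) :=
    ⟨t⁻¹ • 1, hmulinv', hmulinv⟩
  have hinvOf : ⅟(t • (1 : Matrix (Fin n) (Fin n) K)) = t⁻¹ • 1 :=
    invOf_eq_right_inv hmulinv
  have hEG' : (E.map ψ) * (G.map ψ) = 1 := by
    rw [← Matrix.map_mul, hEG, Matrix.map_one] <;> simp
  have lhs1 : θ ((fromBlocks Bᵀ (-E) G 0).charpoly)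
      = (t ^ n) * (h.eval₂ ψ (t + t⁻¹)) := by
    rw [Matrix.charpoly, RingHom.map_det, RingHom.mapMatrix_apply, charmatrix_fromBlocks,
      Matrix.fromBlocks_map, hAψ, hBψ, hCψ, hDψ, Matrix.det_fromBlocks₂₂, hinvOf]
    congr 1
    · rw [Matrix.det_smul, Matrix.det_one, Fintype.card_fin, mul_one]
    · have e1 : E.map ψ * (t⁻¹ • (1 : Matrix (Fin n) (Fin n) K)) * (-(G.map ψ))
          = -(t⁻¹ • (1 : Matrix (Fin n) (Fin n) K)) := by
        rw [Matrix.mul_smul, Matrix.mul_one, Matrix.smul_mul, Matrix.mul_neg, hEG',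
          smul_neg]
      have hschur : t • (1 : Matrix (Fin n) (Fin n) K) - Bᵀ.map ψ
          - E.map ψ * (t⁻¹ • 1) * (-(G.map ψ))
          = (t + t⁻¹) • (1 : Matrix (Fin n) (Fin n) K) - Bᵀ.map ψ := by
        rw [e1, sub_neg_eq_add, add_smul]
        abel
      have e2 : (t + t⁻¹) • (1 : Matrix (Fin n) (Fin n) K) - Bᵀ.map ψ
          = ((t + t⁻¹) • (1 : Matrix (Fin n) (Fin n) K) - B.map ψ)ᵀ := by
        rw [Matrix.transpose_sub, Matrix.transpose_smul, Matrix.transpose_one,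
          Matrix.transpose_map]
      rw [hschur, e2, Matrix.det_transpose, ← det_eval₂_charpoly ψ (t + t⁻¹) B, hch]
  have rhs1 : θ (∑ k ∈ range (n + 1), C (h.coeff k) * (X ^ (n - k) * (X ^ 2 + 1) ^ k))
      = ∑ k ∈ range (n + 1), ψ (h.coeff k) * (t ^ (n - k) * (t ^ 2 + 1) ^ k) := by
    rw [map_sum]
    refine Finset.sum_congr rfl fun k _ => ?_
    simp only [_root_.map_mul, _root_.map_pow, _root_.map_add, _root_.map_one]
    rfl
  rw [lhs1, rhs1, eval₂_eq_sum_range' ψ (by omega : h.natDegree < n + 1), Finset.mul_sum]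
  refine Finset.sum_congr rfl fun k hk => ?_
  have hkn : k ≤ n := Nat.lt_succ_iff.mp (Finset.mem_range.mp hk)
  have e1 : (t + t⁻¹) * t = t ^ 2 + 1 := by
    rw [add_mul, inv_mul_cancel₀ ht]
    ring
  have e2 : t ^ n = t ^ (n - k) * t ^ k := by
    rw [← pow_add]
    congr 1
    omega
  calc t ^ n * (ψ (h.coeff k) * (t + t⁻¹) ^ k)
      = ψ (h.coeff k) * (t ^ (n - k) * ((t + t⁻¹) * t) ^ k) := by
        rw [e2, mul_pow]; ring
    _ = ψ (h.coeff k) * (t ^ (n - k) * (t ^ 2 + 1) ^ k) := by rw [e1]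

lemma exists_blocks (h : F[X]) (hm : h.Monic) (hd : 1 ≤ h.natDegree) :
    ∃ B E G : Matrix (Fin h.natDegree) (Fin h.natDegree) F,
      Eᵀ = E ∧ E * G = 1 ∧ G * E = 1 ∧ Bᵀ * E = E * B ∧ B.charpoly = h := by
  classical
  have hne : h ≠ 0 := hm.ne_zero
  set d := h.natDegree with hdd
  let pb : PowerBasis F (AdjoinRoot h) := AdjoinRoot.powerBasis hne
  let bb : Module.Basis (Fin d) F (AdjoinRoot h) := pb.basis
  let lst : Fin d := ⟨d - 1, by omega⟩
  let ℓ : AdjoinRoot h →ₗ[F] F := bb.coord lst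
  let B : Matrix (Fin d) (Fin d) F := Algebra.leftMulMatrix bb (AdjoinRoot.root h)
  let E : Matrix (Fin d) (Fin d) F := Matrix.of fun i j => ℓ (bb i * bb j)
  have hEapp : ∀ i j, E i j = ℓ (bb i * bb j) := fun i j => rfl
  have hkey : ∀ u v : AdjoinRoot h, (∑ k, bb.repr u k * ℓ (bb k * v)) = ℓ (u * v) := by
    intro u v
    conv_rhs => rw [← bb.sum_repr u]
    rw [Finset.sum_mul, map_sum]
    refine Finset.sum_congr rfl fun k _ => ?_
    rw [smul_mul_assoc, _root_.map_smul, smul_eq_mul]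
  have hBapp : ∀ i j, B i j = bb.repr (AdjoinRoot.root h * bb j) i := fun i j =>
    Algebra.leftMulMatrix_eq_repr_mul bb _ i j
  have hE : Eᵀ = E := by
    ext i j
    rw [Matrix.transpose_apply, hEapp, hEapp, mul_comm]
  have hBE : Bᵀ * E = E * B := by
    ext i j
    rw [Matrix.mul_apply, Matrix.mul_apply]
    calc ∑ k, Bᵀ i k * E k j
        = ∑ k, bb.repr (AdjoinRoot.root h * bb i) k * ℓ (bb k * bb j) := by
          refine Finset.sum_congr rfl fun k _ => ?_
          rw [Matrix.transpose_apply, hBapp, hEapp]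
      _ = ℓ (AdjoinRoot.root h * bb i * bb j) := hkey _ _
      _ = ℓ (AdjoinRoot.root h * bb j * bb i) := by rw [mul_right_comm]
      _ = ∑ k, bb.repr (AdjoinRoot.root h * bb j) k * ℓ (bb k * bb i) := (hkey _ _).symm
      _ = ∑ k, E i k * B k j := by
          refine Finset.sum_congr rfl fun k _ => ?_
          rw [hBapp, hEapp, mul_comm (bb i) (bb k), mul_comm]
  have hbbpow : ∀ i : Fin d, bb i = AdjoinRoot.root h ^ (i : ℕ) := by
    intro i
    show pb.basis i = AdjoinRoot.root h ^ (i : ℕ)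
    rw [pb.coe_basis]
    rw [AdjoinRoot.powerBasis_gen]
  have hElow : ∀ i j : Fin d, (i : ℕ) + (j : ℕ) < d →
      E i j = if (i : ℕ) + (j : ℕ) = d - 1 then 1 else 0 := by
    intro i j hij
    have hbb : bb i * bb j = bb ⟨(i : ℕ) + (j : ℕ), hij⟩ := by
      rw [hbbpow, hbbpow, hbbpow, ← pow_add]
    rw [hEapp, hbb]
    show bb.coord lst (bb _) = _
    rw [Module.Basis.coord_apply, bb.repr_self, Finsupp.single_apply]
    have : (⟨(i : ℕ) + (j : ℕ), hij⟩ : Fin d) = lst ↔ (i : ℕ) + (j : ℕ) = d - 1 := by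
      rw [Fin.ext_iff]
    rw [if_congr this rfl rfl]
  have hNtri : (E.submatrix id ⇑(Fin.revPerm : Equiv.Perm (Fin d))).BlockTriangular
      OrderDual.toDual := by
    intro i j hij
    have hij' : (i : ℕ) < (j : ℕ) := hij
    show E i (Fin.rev j) = 0
    have h1 : (Fin.rev j : ℕ) = d - ((j : ℕ) + 1) := Fin.val_rev j
    have h2 := j.isLt
    rw [hElow _ _ (by omega), if_neg (by omega)]
  have hdetN : (E.submatrix id ⇑(Fin.revPerm : Equiv.Perm (Fin d))).det = 1 := by
    rw [Matrix.det_of_lowerTriangular _ hNtri]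
    refine Finset.prod_eq_one fun i _ => ?_
    show E i (Fin.rev i) = 1
    have h1 : (Fin.rev i : ℕ) = d - ((i : ℕ) + 1) := Fin.val_rev i
    have h2 := i.isLt
    rw [hElow _ _ (by omega), if_pos (by omega)]
  have hsign := Matrix.det_permute' (Fin.revPerm : Equiv.Perm (Fin d)) E
  have hunit : IsUnit E.det := by
    rw [hdetN] at hsign
    refine IsUnit.of_mul_eq_one
      ((((Equiv.Perm.sign (Fin.revPerm : Equiv.Perm (Fin d))) : ℤ) : F)) ?_
    rw [mul_comm]
    exact hsign.symm
  have hBc : B.charpoly = h := by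
    have h1 : B.charpoly = minpoly F pb.gen := charpoly_leftMulMatrix pb
    rw [h1, AdjoinRoot.minpoly_powerBasis_gen_of_monic hm]
  exact ⟨B, E, E⁻¹, hE, Matrix.mul_nonsing_inv E hunit, Matrix.nonsing_inv_mul E hunit,
    hBE, hBc⟩

end Stmt16Aux

/-- Every self-reciprocal monic polynomial of degree `2n` over a field of characteristic
`≠ 2` is the characteristic polynomial of a matrix in the symplectic group `Sp_{2n}(F)`. -/
theorem stmt16 {F : Type*} [Field F] (hchar : (2 : F) ≠ 0) (n : ℕ)
    (f : Polynomial F) (hmonic : f.Monic) (hdeg : f.natDegree = 2 * n)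
    (hselfrecip : f.reverse = f) :
    ∃ S : Matrix (Fin n ⊕ Fin n) (Fin n ⊕ Fin n) F,
      S ∈ Matrix.symplecticGroup (Fin n) F ∧ S.charpoly = f := by
  classical
  rcases Nat.eq_zero_or_pos n with hn0 | hnpos
  · subst hn0
    refine ⟨1, one_mem _, ?_⟩
    have hf1 : f = 1 := by
      have : f.natDegree = 0 := by omega
      exact hmonic.natDegree_eq_zero.mp this
    rw [hf1, Matrix.charpoly, Matrix.det_isEmpty]
  · have hrefl : f.reflect (2 * n) = f := by
      rw [← hdeg]
      exact hselfrecip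
    obtain ⟨h, hhm, hhd, hrep⟩ := Stmt16Aux.exists_palin_rep n f hmonic hdeg hrefl
    obtain ⟨B, E, G, hE, hEG, hGE, hBE, hBc⟩ :=
      Stmt16Aux.exists_blocks h hhm (by omega)
    set e : Fin h.natDegree ≃ Fin n := finCongr hhd with hedef
    set B' : Matrix (Fin n) (Fin n) F := B.submatrix ⇑e.symm ⇑e.symm with hB'd
    set E' : Matrix (Fin n) (Fin n) F := E.submatrix ⇑e.symm ⇑e.symm with hE'd
    set G' : Matrix (Fin n) (Fin n) F := G.submatrix ⇑e.symm ⇑e.symm with hG'd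
    have htrans : ∀ M : Matrix (Fin h.natDegree) (Fin h.natDegree) F,
        (M.submatrix ⇑e.symm ⇑e.symm)ᵀ = Mᵀ.submatrix ⇑e.symm ⇑e.symm := fun M =>
      Matrix.transpose_submatrix M ⇑e.symm ⇑e.symm
    have hmul : ∀ M N : Matrix (Fin h.natDegree) (Fin h.natDegree) F,
        (M.submatrix ⇑e.symm ⇑e.symm) * (N.submatrix ⇑e.symm ⇑e.symm)
          = (M * N).submatrix ⇑e.symm ⇑e.symm := fun M N =>
      Matrix.submatrix_mul_equiv M N _ e.symm _
    have hone : (1 : Matrix (Fin h.natDegree) (Fin h.natDegree) F).submatrix ⇑e.symm ⇑e.symm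
        = (1 : Matrix (Fin n) (Fin n) F) := Matrix.submatrix_one_equiv e.symm
    have hE2 : E'ᵀ = E' := by rw [hE'd, htrans, hE]
    have hEG2 : E' * G' = 1 := by rw [hE'd, hG'd, hmul, hEG, hone]
    have hGE2 : G' * E' = 1 := by rw [hG'd, hE'd, hmul, hGE, hone]
    have hBE2 : B'ᵀ * E' = E' * B' := by rw [hB'd, hE'd, htrans, hmul, hmul, hBE]
    have hBc2 : B'.charpoly = h := by
      rw [hB'd, ← Matrix.reindex_apply, Matrix.charpoly_reindex, hBc]
    refine ⟨fromBlocks B'ᵀ (-E') G' 0, ?_, ?_⟩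
    · exact Stmt16Aux.symplectic_witness B' E' G' hE2 hEG2 hGE2 hBE2
    · rw [Stmt16Aux.charpoly_witness B' E' G' hEG2 h hBc2 (by omega)]
      exact hrep.symm
end

section
/- If g is a semisimple symplectic transformation of a symplectic 𝔽_ℓ-vector space V and M is a g-invariant Lagrangian with g-invariant complement M′, then the set {x ∈ M′ : gx − x ∈ M + gM} equals the fixed-point subspace (M′)^g, whose cardinality is √|V^g|. -/
open Module LinearMap Submodule

lemma aux_le {k V : Type*} [Field k] [AddCommGroup V] [Module k V] [FiniteDimensional k V]
    (B : V →ₗ[k] V →ₗ[k] k) (g : Module.End k V)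
    (hB : ∀ v w, B (g v) (g w) = B v w)
    (M M' : Submodule k V) (hM : ∀ x ∈ M, g x ∈ M)
    (hP : Function.Bijective (B.domRestrict₁₂ M M')) :
    finrank k (comap M'.subtype (LinearMap.ker (g - 1))) ≤
      finrank k (comap M.subtype (LinearMap.ker (g - 1))) := by
  classical
  set P := B.domRestrict₁₂ M M' with hPdef
  set W' : Submodule k M' := comap M'.subtype (LinearMap.ker (g - 1)) with hW'
  have hrestr : ∀ x ∈ M, (g - 1) x ∈ M := by
    intro x hx
    simpa using sub_mem (hM x hx) hx
  set f : M →ₗ[k] M := (g - 1).restrict hrestr with hf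
  have hker : LinearMap.ker f = comap M.subtype (LinearMap.ker (g - 1)) := by
    ext x
    simp [hf, LinearMap.mem_ker, LinearMap.restrict_apply, Subtype.ext_iff]
  set e : M ≃ₗ[k] Module.Dual k M' := LinearEquiv.ofBijective P hP with he
  have hePcoe : (e : M →ₗ[k] Module.Dual k M') = P :=
    LinearMap.ext fun x => by rw [he]; simp [LinearEquiv.ofBijective_apply]
  set Ann : Submodule k M := comap (e : M →ₗ[k] Module.Dual k M') (W'.dualAnnihilator)
    with hAnn
  have hrange : LinearMap.range f ≤ Ann := by
    rintro _ ⟨x, rfl⟩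
    simp only [hAnn, mem_comap, Submodule.mem_dualAnnihilator, hePcoe]
    intro w hw
    have hgw : g (w : V) = (w : V) := by
      have : (g - 1) (w : V) = 0 := hw
      have := sub_eq_zero.mp (by simpa using this)
      simpa using this
    have h1 : P (f x) w = B ((g - 1) (x : V)) (w : V) := by
      simp [hPdef, hf, LinearMap.domRestrict₁₂_apply, LinearMap.restrict_apply]
    rw [h1]
    have h2 : B ((g : V →ₗ[k] V) (x : V)) (w : V) = B (x : V) (w : V) := by
      conv_lhs => rw [← hgw]
      exact hB _ _
    simp [LinearMap.sub_apply, h2, sub_eq_zero]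
  have hMM' : finrank k M = finrank k M' := by
    simpa [Subspace.dual_finrank_eq] using e.finrank_eq
  have hAnnrank : finrank k W' + finrank k Ann = finrank k M := by
    have h2 : finrank k Ann = finrank k W'.dualAnnihilator :=
      (LinearEquiv.ofSubmodule' e W'.dualAnnihilator).finrank_eq
    have h3 : finrank k (↥M' ⧸ W') = finrank k W'.dualAnnihilator :=
      (Subspace.quotEquivAnnihilator W').finrank_eq
    have h4 := Submodule.finrank_quotient_add_finrank W'
    omega
  have h5 := LinearMap.finrank_range_add_finrank_ker f
  have h6 : finrank k (LinearMap.range f) ≤ finrank k Ann :=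
    Submodule.finrank_mono hrange
  rw [← hker]
  omega

/-- For `g` semisimple with `g`-invariant Lagrangian `M` and `g`-invariant complement `M'`,
the set `{x ∈ M' : gx − x ∈ M + gM}` equals the fixed-point set `(M')^g`, whose cardinality
is `√|V^g|`. -/
theorem stmt18 (ℓ : ℕ) [Fact (Nat.Prime ℓ)] (hodd : ℓ ≠ 2)
    {V : Type*} [AddCommGroup V] [Module (ZMod ℓ) V] [FiniteDimensional (ZMod ℓ) V]
    (ω : LinearMap.BilinForm (ZMod ℓ) V) (halt : ω.IsAlt) (hnd : ω.Nondegenerate)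
    (g : Module.End (ZMod ℓ) V) (hg : ∀ v w : V, ω (g v) (g w) = ω v w)
    (hss : g.IsSemisimple)
    (M M' : Submodule (ZMod ℓ) V)
    (hiso : ∀ x ∈ M, ∀ y ∈ M, ω x y = 0)
    (hdim : 2 * Module.finrank (ZMod ℓ) M = Module.finrank (ZMod ℓ) V)
    (hgM : Submodule.map g M = M)
    (hcompl : IsCompl M M') (hgM' : Submodule.map g M' ≤ M') :
    {x : V | x ∈ M' ∧ g x - x ∈ M ⊔ Submodule.map g M} = {x : V | x ∈ M' ∧ g x = x} ∧
    Nat.card ↥(M' ⊓ LinearMap.ker (g - 1)) ^ 2 = Nat.card ↥(LinearMap.ker (g - 1)) := by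
  classical
  set K := LinearMap.ker (g - 1) with hK
  have hMg : ∀ x ∈ M, g x ∈ M := fun x hx => hgM ▸ Submodule.mem_map_of_mem hx
  have hM'g : ∀ x ∈ M', g x ∈ M' := fun x hx => hgM' (Submodule.mem_map_of_mem hx)
  have hfix_mem : ∀ x, x ∈ K ↔ g x = x := by
    intro x
    simp [hK, LinearMap.mem_ker, sub_eq_zero]
  constructor
  · ext x
    simp only [Set.mem_setOf_eq, hgM, sup_idem]
    constructor
    · rintro ⟨hx, hmem⟩
      refine ⟨hx, ?_⟩
      have h1 : g x - x ∈ M' := sub_mem (hM'g x hx) hx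
      have h2 : g x - x ∈ M ⊓ M' := ⟨hmem, h1⟩
      rw [hcompl.inf_eq_bot, Submodule.mem_bot] at h2
      exact sub_eq_zero.mp h2
    · rintro ⟨hx, hfix⟩
      exact ⟨hx, by simp [hfix]⟩
  -- cardinality part
  have hMfr : finrank (ZMod ℓ) M = finrank (ZMod ℓ) M' := by
    have := Submodule.finrank_add_eq_of_isCompl hcompl
    omega
  -- the pairing M × M' → k is perfect
  set P1 := ω.domRestrict₁₂ M M' with hP1def
  have hP1inj : Function.Injective P1 := by
    rw [← LinearMap.ker_eq_bot]
    ext x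
    simp only [LinearMap.mem_ker, Submodule.mem_bot]
    constructor
    · intro h0
      have hxv : ∀ v : V, ω (x : V) v = 0 := by
        intro v
        have hv : v ∈ M ⊔ M' := by rw [hcompl.sup_eq_top]; trivial
        obtain ⟨a, ha, b, hb, rfl⟩ := Submodule.mem_sup.mp hv
        have h1 : ω (x : V) a = 0 := hiso (x : V) x.2 a ha
        have h2 : ω (x : V) b = 0 := by
          have := LinearMap.congr_fun h0 ⟨b, hb⟩
          simpa [hP1def, LinearMap.domRestrict₁₂_apply] using this
        simp [map_add, h1, h2]
      exact Subtype.ext (hnd.1 (x : V) hxv)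
    · rintro rfl; simp
  have hP1 : Function.Bijective P1 :=
    ⟨hP1inj, (LinearMap.injective_iff_surjective_of_finrank_eq_finrank
      (by rw [Subspace.dual_finrank_eq, hMfr])).mp hP1inj⟩
  set P2 := ω.flip.domRestrict₁₂ M' M with hP2def
  have hP2inj : Function.Injective P2 := by
    rw [← LinearMap.ker_eq_bot]
    ext x
    simp only [LinearMap.mem_ker, Submodule.mem_bot]
    constructor
    · intro h0
      have hφ : ∀ φ : Module.Dual (ZMod ℓ) M', φ x = 0 := by
        intro φ
        obtain ⟨m, hm⟩ := hP1.2 φ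
        rw [← hm]
        have := LinearMap.congr_fun h0 m
        simpa [hP1def, hP2def, LinearMap.domRestrict₁₂_apply, LinearMap.flip_apply] using this
      exact (Module.forall_dual_apply_eq_zero_iff (ZMod ℓ) x).mp hφ
    · rintro rfl; simp
  have hP2 : Function.Bijective P2 :=
    ⟨hP2inj, (LinearMap.injective_iff_surjective_of_finrank_eq_finrank
      (by rw [Subspace.dual_finrank_eq, hMfr])).mp hP2inj⟩
  have hB2 : ∀ v w, ω.flip (g v) (g w) = ω.flip v w := by
    intro v w
    simp [LinearMap.flip_apply, hg]
  have hle1 := aux_le ω g hg M M' hMg hP1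
  have hle2 := aux_le ω.flip g hB2 M' M hM'g hP2
  have haa : finrank (ZMod ℓ) (Submodule.comap M.subtype K)
      = finrank (ZMod ℓ) (Submodule.comap M'.subtype K) := le_antisymm hle2 hle1
  have hfr : ∀ N : Submodule (ZMod ℓ) V,
      finrank (ZMod ℓ) ↥(N ⊓ K) = finrank (ZMod ℓ) ↥(Submodule.comap N.subtype K) := by
    intro N
    have hcm : Submodule.comap N.subtype K = Submodule.comap N.subtype (N ⊓ K) := by
      ext x
      simp [Submodule.mem_comap, x.2]
    rw [hcm]
    exact (Submodule.comapSubtypeEquivOfLe inf_le_left).finrank_eq.symm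
  have hinf : finrank (ZMod ℓ) ↥(M ⊓ K) = finrank (ZMod ℓ) ↥(M' ⊓ K) := by
    rw [hfr, hfr, haa]
  -- K decomposes
  have hKsup : (M ⊓ K) ⊔ (M' ⊓ K) = K := by
    apply le_antisymm (sup_le inf_le_right inf_le_right)
    intro x hx
    have hv : x ∈ M ⊔ M' := by rw [hcompl.sup_eq_top]; trivial
    obtain ⟨m, hm, m', hm', rfl⟩ := Submodule.mem_sup.mp hv
    have hgx : g (m + m') = m + m' := (hfix_mem _).mp hx
    rw [map_add] at hgx
    have hd : g m - m = m' - g m' := by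
      rw [sub_eq_sub_iff_add_eq_add]
      simpa [add_comm] using hgx
    have hz : g m - m ∈ M ⊓ M' :=
      ⟨sub_mem (hMg m hm) hm, hd ▸ sub_mem hm' (hM'g m' hm')⟩
    rw [hcompl.inf_eq_bot, Submodule.mem_bot] at hz
    have hfm : g m = m := sub_eq_zero.mp hz
    have hfm' : g m' = m' := by
      rw [hd] at hz
      exact (sub_eq_zero.mp hz).symm
    exact Submodule.add_mem _
      (Submodule.mem_sup_left ⟨hm, (hfix_mem m).mpr hfm⟩)
      (Submodule.mem_sup_right ⟨hm', (hfix_mem m').mpr hfm'⟩)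
  have hdisj : (M ⊓ K) ⊓ (M' ⊓ K) = ⊥ := by
    have h : (M ⊓ K) ⊓ (M' ⊓ K) ≤ M ⊓ M' := inf_le_inf inf_le_left inf_le_left
    rw [hcompl.inf_eq_bot] at h
    exact le_bot_iff.mp h
  have hsum := Submodule.finrank_sup_add_finrank_inf_eq (M ⊓ K) (M' ⊓ K)
  rw [hKsup, hdisj] at hsum
  simp only [finrank_bot, add_zero] at hsum
  -- cardinalities
  haveI : Finite V := Module.finite_of_finite (ZMod ℓ)
  have hcard : ∀ S : Submodule (ZMod ℓ) V, Nat.card ↥S = ℓ ^ finrank (ZMod ℓ) ↥S := by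
    intro S
    letI : Fintype ↥S := Fintype.ofFinite _
    rw [Nat.card_eq_fintype_card, card_eq_pow_finrank (K := ZMod ℓ) (V := ↥S), ZMod.card]
  rw [hcard, hcard, ← pow_mul]
  congr 1
  omega
end
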